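/- Let p(n) > 0 for all n ≥ a and suppose Σ_{s=a}^{∞} 1/p(s) = ∞. Then the solution u₂ of Δ(p(n-1)Δu(n-1)) = r(n)u(n) (r ≥ 0) given by u₂(n) = Σ_{k=0}^{n-n₀-1} Y^{(2k+1)}(n) satisfies u₂(n) ≥ Y^{(1)}(n) = Σ_{s=n₀}^{n-1} 1/p(s) for n > n₀, and hence u₂ is unbounded. -/

import Mathlib

/-- The indefinite sum of `f` vanishing at `n₀` (real-valued). -/
noncomputable def istarR (n₀ : ℤ) (f : ℤ → ℝ) (n : ℤ) : ℝ :=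
  if n₀ ≤ n then ∑ j ∈ Finset.Ico n₀ n, f j else -∑ j ∈ Finset.Ico n n₀, f j

/-- The sequences `Y⁽ⁱ⁾` built from `u₀ ≡ 1`: `Y⁽⁰⁾ = 1`, even steps sum
`Y⁽ⁱ⁻¹⁾(s+1) r(s+1)`, odd steps sum `Y⁽ⁱ⁻¹⁾(s)/p(s)`. -/
noncomputable def YseqR (p r : ℤ → ℝ) (n₀ : ℤ) : ℕ → ℤ → ℝ
  | 0 => fun _ => 1
  | i + 1 =>
      if (i + 1) % 2 = 0 then
        istarR n₀ (fun s => YseqR p r n₀ i (s + 1) * r (s + 1))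
      else
        istarR n₀ (fun s => YseqR p r n₀ i s / p s)

lemma Y_nonneg (p r : ℤ → ℝ) (a n₀ : ℤ)
    (hp : ∀ n : ℤ, a ≤ n → 0 < p n) (hr : ∀ n : ℤ, a ≤ n → 0 ≤ r n)
    (hn₀ : a ≤ n₀) : ∀ i : ℕ, ∀ n : ℤ, n₀ ≤ n → 0 ≤ YseqR p r n₀ i n := by
  intro i
  induction i with
  | zero => intro n _; simp [YseqR]
  | succ i ih =>
    intro n hn
    rw [YseqR]
    split
    · rw [istarR, if_pos hn]
      apply Finset.sum_nonneg
      intro s hs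
      rw [Finset.mem_Ico] at hs
      exact mul_nonneg (ih (s + 1) (by omega)) (hr (s + 1) (by omega))
    · rw [istarR, if_pos hn]
      apply Finset.sum_nonneg
      intro s hs
      rw [Finset.mem_Ico] at hs
      exact div_nonneg (ih s hs.1) (le_of_lt (hp s (by omega)))

lemma Y1_eq (p r : ℤ → ℝ) (n₀ : ℤ) (n : ℤ) (hn : n₀ ≤ n) :
    YseqR p r n₀ 1 n = ∑ s ∈ Finset.Ico n₀ n, 1 / p s := by
  rw [show (1 : ℕ) = 0 + 1 from rfl, YseqR]
  norm_num [istarR, if_pos hn, YseqR]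

lemma Ico_singleton (b : ℤ) : Finset.Ico b (b + 1) = {b} := by
  ext x; simp; omega

lemma sum_Ico_split (p : ℤ → ℝ) (a b c : ℤ) (h1 : a ≤ b) (h2 : b ≤ c) :
    ∑ s ∈ Finset.Ico a c, 1 / p s
      = ∑ s ∈ Finset.Ico a b, 1 / p s + ∑ s ∈ Finset.Ico b c, 1 / p s := by
  rw [← Finset.sum_union (Finset.Ico_disjoint_Ico_consecutive a b c),
    Finset.Ico_union_Ico_eq_Ico h1 h2]

lemma sum_Ico_eq_range (p : ℤ → ℝ) (a : ℤ) (N : ℕ) :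
    ∑ s ∈ Finset.Ico a (a + (N : ℤ)), 1 / p s = ∑ j ∈ Finset.range N, 1 / p (a + (j : ℤ)) := by
  induction N with
  | zero => simp
  | succ N ih =>
    rw [Finset.sum_range_succ, ← ih]
    push_cast
    rw [show a + ((N : ℤ) + 1) = (a + N) + 1 by ring,
      sum_Ico_split p a (a + N) (a + N + 1) (by omega) (by omega),
      Ico_singleton, Finset.sum_singleton]

/-- If `p > 0`, `r ≥ 0` and `Σ 1/p(s) = ∞`, then the solution
`u₂(n) = Σ_{k=0}^{n-n₀-1} Y⁽²ᵏ⁺¹⁾(n)` dominates `Y⁽¹⁾(n) = Σ_{s=n₀}^{n-1} 1/p(s)` for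
`n > n₀`, and hence is unbounded. -/
theorem u2_unbounded (p r : ℤ → ℝ) (a n₀ : ℤ) (u₂ : ℤ → ℝ)
    (hp : ∀ n : ℤ, a ≤ n → 0 < p n) (hr : ∀ n : ℤ, a ≤ n → 0 ≤ r n)
    (hdiv : ¬ Summable (fun j : ℕ => 1 / p (a + (j : ℤ))))
    (hn₀ : a ≤ n₀)
    (hu₂ : ∀ n : ℤ, u₂ n = ∑ k ∈ Finset.range (n - n₀).toNat, YseqR p r n₀ (2 * k + 1) n) :
    (∀ n : ℤ, n₀ < n → ∑ s ∈ Finset.Ico n₀ n, 1 / p s ≤ u₂ n) ∧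
    (∀ C : ℝ, ∃ n : ℤ, n₀ < n ∧ C < u₂ n) := by
  have hdom : ∀ n : ℤ, n₀ < n → ∑ s ∈ Finset.Ico n₀ n, 1 / p s ≤ u₂ n := by
    intro n hn
    rw [hu₂ n]
    have hN : (n - n₀).toNat = ((n - n₀).toNat - 1) + 1 := by omega
    rw [hN, Finset.sum_range_succ']
    have h0 : YseqR p r n₀ (2 * 0 + 1) n = ∑ s ∈ Finset.Ico n₀ n, 1 / p s :=
      Y1_eq p r n₀ n (le_of_lt hn)
    rw [h0]
    have : 0 ≤ ∑ k ∈ Finset.range ((n - n₀).toNat - 1), YseqR p r n₀ (2 * (k + 1) + 1) n := by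
      apply Finset.sum_nonneg
      intro k _
      exact Y_nonneg p r a n₀ hp hr hn₀ _ n (le_of_lt hn)
    linarith
  refine ⟨hdom, fun C => ?_⟩
  have hnn : ∀ j : ℕ, 0 ≤ 1 / p (a + (j : ℤ)) := fun j =>
    div_nonneg zero_le_one (le_of_lt (hp _ (by omega)))
  have htend := (not_summable_iff_tendsto_nat_atTop_of_nonneg hnn).mp hdiv
  have hev := (htend.eventually_gt_atTop (C + ∑ s ∈ Finset.Ico a n₀, 1 / p s)).and
    (Filter.eventually_ge_atTop ((n₀ + 1 - a).toNat))
  obtain ⟨N, hN1, hN2⟩ := hev.exists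
  set n : ℤ := a + (N : ℤ) with hn
  have hn₀n : n₀ < n := by omega
  refine ⟨n, hn₀n, ?_⟩
  have hsplit : ∑ s ∈ Finset.Ico a n, 1 / p s
      = ∑ s ∈ Finset.Ico a n₀, 1 / p s + ∑ s ∈ Finset.Ico n₀ n, 1 / p s :=
    sum_Ico_split p a n₀ n hn₀ (le_of_lt hn₀n)
  have := sum_Ico_eq_range p a N
  have hgt : C < ∑ s ∈ Finset.Ico n₀ n, 1 / p s := by
    rw [← hn] at this
    linarith [hN1, hsplit ▸ this]
  exact lt_of_lt_of_le hgt (hdom n hn₀n)
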